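/- For n = 5 Mandelstam variables satisfying momentum conservation, the identity m_5(𝕀,𝕀) = (1/s_{12} + 1/s_{23})(1/(s_{51} − s_{23}) + 1/s_{45}) + (1/s_{12} + 1/s_{51})(1/s_{34} + 1/(s_{23} − s_{51})) holds, where m_5(𝕀,𝕀) = 1/(s_{12}s_{34}) + 1/(s_{23}s_{45}) + 1/(s_{34}s_{51}) + 1/(s_{45}s_{12}) + 1/(s_{51}s_{23}). -/

import Mathlib

/-- The soft-limit triangulation identity for the 5-point biadjoint amplitude
(Equation (6.5) of the paper): under momentum conservation, and for generic
kinematics so that all denominators are nonzero,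
`m₅(𝕀,𝕀) = (1/s12 + 1/s23)(1/(s51 - s23) + 1/s45) + (1/s12 + 1/s51)(1/s34 + 1/(s23 - s51))`,
where `m₅(𝕀,𝕀) = 1/(s12 s34) + 1/(s23 s45) + 1/(s34 s51) + 1/(s45 s12) + 1/(s51 s23)`
and `s51 = s15`. -/
theorem m5_soft_triangulation
    (s12 s13 s14 s15 s23 s24 s25 s34 s35 s45 : ℂ)
    (h1 : s12 + s13 + s14 + s15 = 0)
    (h2 : s12 + s23 + s24 + s25 = 0)
    (h3 : s13 + s23 + s34 + s35 = 0)
    (h4 : s14 + s24 + s34 + s45 = 0)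
    (h5 : s15 + s25 + s35 + s45 = 0)
    (hn12 : s12 ≠ 0) (hn23 : s23 ≠ 0) (hn34 : s34 ≠ 0)
    (hn45 : s45 ≠ 0) (hn15 : s15 ≠ 0) (hn : s15 - s23 ≠ 0) :
    1/(s12 * s34) + 1/(s23 * s45) + 1/(s34 * s15) + 1/(s45 * s12) + 1/(s15 * s23)
      = (1/s12 + 1/s23) * (1/(s15 - s23) + 1/s45)
        + (1/s12 + 1/s15) * (1/s34 + 1/(s23 - s15)) := by
  have hn2 : s23 - s15 ≠ 0 := fun h => hn (by linear_combination -h)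
  field_simp
  ring
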